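/- The generating function D^+(x,y;t) of Dyck N-meanders (with weights p_{-1}, p_1, p_{-1,1} on N-steps {-1}, {1}, {-1,1}) satisfies the functional equation D^+(x,y;t) = 1 + t(p_{-1} x^{-1} y^{-1} + p_1 x y + p_{-1,1} x^{-1} y)(D^+(x,y;t) - D^+(0,y;t)) + t(p_{-1} x y^{-1} + (p_1 + p_{-1,1}) x y)(D^+(0,y;t) - D^+(0,0;t)) + t(p_1 + p_{-1,1}) x y D^+(0,0;t). -/

import Mathlib

/-- A classical walk `v` is compatible with the N-walk `w` if they have the same
length and the `i`-th step of `v` belongs to the `i`-th N-step of `w`. -/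
def Compatible (v : List ℤ) (w : List (Finset ℤ)) : Prop :=
  List.Forall₂ (· ∈ ·) v w

/-- The reachable points of an N-walk: endpoints of all compatible classical walks. -/
def reach (w : List (Finset ℤ)) : Set ℤ :=
  {r | ∃ v : List ℤ, Compatible v w ∧ v.sum = r}

/-- Minimal reachable point. -/
noncomputable def wmin (w : List (Finset ℤ)) : ℤ := sInf (reach w)

/-- Maximal reachable point. -/
noncomputable def wmax (w : List (Finset ℤ)) : ℤ := sSup (reach w)

/-- A Dyck N-walk: every N-step is one of {-1}, {1}, {-1,1}. -/
def IsDyckNWalk (w : List (Finset ℤ)) : Prop :=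
  ∀ s ∈ w, s = {-1} ∨ s = {1} ∨ s = ({-1, 1} : Finset ℤ)

/-- A Motzkin N-walk: every N-step is a nonempty subset of {-1,0,1}. -/
def IsMotzkinNWalk (w : List (Finset ℤ)) : Prop :=
  ∀ s ∈ w, s.Nonempty ∧ s ⊆ ({-1, 0, 1} : Finset ℤ)

/-- A classical meander: all partial sums are nonnegative. -/
def IsMeanderW (v : List ℤ) : Prop := ∀ n : ℕ, 0 ≤ (v.take n).sum

/-- An N-bridge: compatible with at least one classical walk ending at 0. -/
def IsNBridge (w : List (Finset ℤ)) : Prop := ∃ v, Compatible v w ∧ v.sum = 0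

/-- An N-meander: compatible with at least one classical meander. -/
def IsNMeander (w : List (Finset ℤ)) : Prop := ∃ v, Compatible v w ∧ IsMeanderW v

/-- An N-excursion: compatible with at least one classical excursion. -/
def IsNExcursion (w : List (Finset ℤ)) : Prop :=
  ∃ v, Compatible v w ∧ IsMeanderW v ∧ v.sum = 0

/-- Reachable points via compatible meanders (nonnegative partial sums). -/
def reachM (w : List (Finset ℤ)) : Set ℤ :=
  {r | ∃ v, Compatible v w ∧ IsMeanderW v ∧ v.sum = r}

/-- The three Dyck N-steps: index 0 ↦ {-1} (weight p₋₁), 1 ↦ {1} (weight p₁),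
2 ↦ {-1,1} (weight p₋₁,₁). -/
def dstep : Fin 3 → Finset ℤ := ![{-1}, {1}, {-1, 1}]

/-- The Dyck N-walk encoded by a function Fin n → Fin 3. -/
def dwalk {n : ℕ} (f : Fin n → Fin 3) : List (Finset ℤ) := List.ofFn fun k => dstep (f k)

open Classical in
/-- Total weight of Dyck N-meanders of length n with min⁺ = i and max⁺ = j,
i.e. the coefficient of xⁱ yʲ tⁿ in D⁺(x,y;t). -/
noncomputable def coefD (p : Fin 3 → ℝ) (i j n : ℕ) : ℝ :=
  ∑ f : Fin n → Fin 3,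
    if (reachM (dwalk f)).Nonempty ∧ sInf (reachM (dwalk f)) = (i : ℤ) ∧
        sSup (reachM (dwalk f)) = (j : ℤ)
    then ∏ k, p (f k) else 0

/-- D⁺(x,y;t) as a power series in x = X 0, y = X 1, t = X 2. -/
noncomputable def Dxy (p : Fin 3 → ℝ) : MvPowerSeries (Fin 3) ℝ :=
  fun m => coefD p (m 0) (m 1) (m 2)

/-- D⁺(0,y;t). -/
noncomputable def D0y (p : Fin 3 → ℝ) : MvPowerSeries (Fin 3) ℝ :=
  fun m => if m 0 = 0 then coefD p 0 (m 1) (m 2) else 0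

/-- D⁺(0,0;t). -/
noncomputable def D00 (p : Fin 3 → ℝ) : MvPowerSeries (Fin 3) ℝ :=
  fun m => if m 0 = 0 ∧ m 1 = 0 then coefD p 0 0 (m 2) else 0

lemma compatible_nil {v : List ℤ} : Compatible v [] ↔ v = [] :=
  List.forall₂_nil_right_iff

lemma reachM_nil : reachM [] = {0} := by
  ext r
  simp only [reachM, Set.mem_setOf_eq, Set.mem_singleton_iff]
  constructor
  · rintro ⟨v, hc, _, hs⟩
    rw [compatible_nil.mp hc] at hs; simpa using hs.symm
  · rintro rfl
    exact ⟨[], compatible_nil.mpr rfl, fun n => by simp, rfl⟩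

lemma meander_snoc (v : List ℤ) (x : ℤ) :
    IsMeanderW (v ++ [x]) ↔ IsMeanderW v ∧ 0 ≤ v.sum + x := by
  constructor
  · intro h
    refine ⟨fun n => ?_, ?_⟩
    · have := h n
      rcases Nat.lt_or_ge n (v.length + 1) with hn | hn
      · rwa [List.take_append_of_le_length (by omega)] at this
      · rw [List.take_of_length_le (by omega)]
        have h2 := h v.length
        rwa [List.take_append_of_le_length le_rfl, List.take_length] at h2
    · have := h (v.length + 1)
      rwa [List.take_of_length_le (by simp), List.sum_append, List.sum_singleton] at this
  · rintro ⟨h1, h2⟩ n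
    rcases Nat.lt_or_ge n (v.length + 1) with hn | hn
    · rw [List.take_append_of_le_length (by omega)]; exact h1 n
    · rw [List.take_of_length_le (by simp; omega), List.sum_append, List.sum_singleton]; exact h2

lemma compatible_snoc {v : List ℤ} {w : List (Finset ℤ)} {s : Finset ℤ} :
    Compatible v (w ++ [s]) ↔ ∃ v' x, Compatible v' w ∧ x ∈ s ∧ v = v' ++ [x] := by
  constructor
  · intro h
    have h' : List.Forall₂ (· ∈ ·) v.reverse.reverse (w ++ [s]) := by simpa [Compatible] using h
    rw [← List.forall₂_reverse_iff] at h'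
    simp only [List.reverse_append, List.reverse_singleton, List.singleton_append] at h'
    rcases List.forall₂_cons_right_iff.mp h' with ⟨x, l', hx, hl, hv⟩
    refine ⟨l'.reverse, x, ?_, hx, ?_⟩
    · rw [← List.forall₂_reverse_iff] at hl; simpa [Compatible] using hl
    · have : v.reverse = x :: l' := by simpa using hv
      rw [← List.reverse_reverse v, this]; simp
  · rintro ⟨v', x, hc, hx, rfl⟩
    exact List.rel_append hc (List.Forall₂.cons hx List.Forall₂.nil)

lemma reachM_snoc (w : List (Finset ℤ)) (s : Finset ℤ) :
    reachM (w ++ [s]) = {t | ∃ r ∈ reachM w, ∃ x ∈ s, t = r + x ∧ 0 ≤ t} := by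
  ext t
  simp only [reachM, Set.mem_setOf_eq]
  constructor
  · rintro ⟨v, hc, hm, hs⟩
    rcases compatible_snoc.mp hc with ⟨v', x, hc', hx, rfl⟩
    rw [meander_snoc] at hm
    rw [List.sum_append, List.sum_singleton] at hs
    exact ⟨v'.sum, ⟨v', hc', hm.1, rfl⟩, x, hx, hs.symm, hs ▸ hm.2⟩
  · rintro ⟨r, ⟨v', hc', hm', rfl⟩, x, hx, rfl, ht⟩
    exact ⟨v' ++ [x], compatible_snoc.mpr ⟨v', x, hc', hx, rfl⟩,
      (meander_snoc v' x).mpr ⟨hm', ht⟩, by simp⟩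

/-- the "parity interval" `{i, i+2, ..., j}`. -/
def goodSet (i j : ℤ) : Set ℤ := {r | i ≤ r ∧ r ≤ j ∧ 2 ∣ r - i}

lemma reachM_snoc_empty {w : List (Finset ℤ)} (h : reachM w = ∅) (s : Finset ℤ) :
    reachM (w ++ [s]) = ∅ := by
  rw [reachM_snoc, h]; simp

section trans
variable {w : List (Finset ℤ)} {i j : ℤ}

lemma mem_neg_one : ∀ x : ℤ, x ∈ ({-1} : Finset ℤ) ↔ x = -1 := by simp
lemma mem_one : ∀ x : ℤ, x ∈ ({1} : Finset ℤ) ↔ x = 1 := by simp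
lemma mem_both : ∀ x : ℤ, x ∈ ({-1, 1} : Finset ℤ) ↔ x = -1 ∨ x = 1 := by simp

lemma step_neg_dead (h : reachM w = goodSet i j) (hj : j ≤ 0) :
    reachM (w ++ [{-1}]) = ∅ := by
  rw [reachM_snoc, h]
  ext t
  simp only [Set.mem_setOf_eq, goodSet, Set.mem_empty_iff_false, iff_false, not_exists]
  rintro r ⟨⟨h1, h2, h3⟩, x, hx, rfl, ht⟩
  rw [mem_neg_one] at hx
  omega

lemma step_neg_zero (h : reachM w = goodSet i j) (hi : i = 0) (hj : 2 ≤ j) :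
    reachM (w ++ [{-1}]) = goodSet 1 (j - 1) := by
  rw [reachM_snoc, h]
  ext t
  simp only [Set.mem_setOf_eq, goodSet]
  constructor
  · rintro ⟨r, ⟨h1, h2, h3⟩, x, hx, rfl, ht⟩
    rw [mem_neg_one] at hx
    omega
  · rintro ⟨h1, h2, h3⟩
    exact ⟨t + 1, ⟨by omega, by omega, by omega⟩, -1, by rw [mem_neg_one], by ring, by omega⟩

lemma step_neg_pos (h : reachM w = goodSet i j) (hi : 1 ≤ i) (hj : i ≤ j) :
    reachM (w ++ [{-1}]) = goodSet (i - 1) (j - 1) := by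
  rw [reachM_snoc, h]
  ext t
  simp only [Set.mem_setOf_eq, goodSet]
  constructor
  · rintro ⟨r, ⟨h1, h2, h3⟩, x, hx, rfl, ht⟩
    rw [mem_neg_one] at hx
    omega
  · rintro ⟨h1, h2, h3⟩
    exact ⟨t + 1, ⟨by omega, by omega, by omega⟩, -1, by rw [mem_neg_one], by ring, by omega⟩

lemma step_pos (h : reachM w = goodSet i j) (hi : 0 ≤ i) (hj : i ≤ j) :
    reachM (w ++ [{1}]) = goodSet (i + 1) (j + 1) := by
  rw [reachM_snoc, h]
  ext t
  simp only [Set.mem_setOf_eq, goodSet]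
  constructor
  · rintro ⟨r, ⟨h1, h2, h3⟩, x, hx, rfl, ht⟩
    rw [mem_one] at hx
    omega
  · rintro ⟨h1, h2, h3⟩
    exact ⟨t - 1, ⟨by omega, by omega, by omega⟩, 1, by rw [mem_one], by ring, by omega⟩

lemma step_both_zero (h : reachM w = goodSet i j) (hi : i = 0) (hj : i ≤ j) :
    reachM (w ++ [{-1, 1}]) = goodSet 1 (j + 1) := by
  rw [reachM_snoc, h]
  ext t
  simp only [Set.mem_setOf_eq, goodSet]
  constructor
  · rintro ⟨r, ⟨h1, h2, h3⟩, x, hx, rfl, ht⟩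
    rw [mem_both] at hx
    rcases hx with rfl | rfl <;> omega
  · rintro ⟨h1, h2, h3⟩
    rcases le_or_gt t j with hc | hc
    · exact ⟨t - 1, ⟨by omega, by omega, by omega⟩, 1, by rw [mem_both]; right; rfl, by ring, by omega⟩
    · exact ⟨t - 1, ⟨by omega, by omega, by omega⟩, 1, by rw [mem_both]; right; rfl, by ring, by omega⟩

lemma step_both_pos (h : reachM w = goodSet i j) (hi : 1 ≤ i) (hj : i ≤ j) (hp : 2 ∣ j - i) :
    reachM (w ++ [{-1, 1}]) = goodSet (i - 1) (j + 1) := by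
  rw [reachM_snoc, h]
  ext t
  simp only [Set.mem_setOf_eq, goodSet]
  constructor
  · rintro ⟨r, ⟨h1, h2, h3⟩, x, hx, rfl, ht⟩
    rw [mem_both] at hx
    rcases hx with rfl | rfl <;> omega
  · rintro ⟨h1, h2, h3⟩
    rcases le_or_gt t (j - 1) with hc | hc
    · exact ⟨t + 1, ⟨by omega, by omega, by omega⟩, -1, by rw [mem_both]; left; rfl, by ring, by omega⟩
    · exact ⟨t - 1, ⟨by omega, by omega, by omega⟩, 1, by rw [mem_both]; right; rfl, by ring, by omega⟩
end trans

lemma reachM_struct {w : List (Finset ℤ)} (hw : IsDyckNWalk w) :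
    reachM w = ∅ ∨
      ∃ i j : ℤ, 0 ≤ i ∧ i ≤ j ∧ 2 ∣ j - i ∧ reachM w = goodSet i j := by
  induction w using List.reverseRecOn with
  | nil =>
    right
    refine ⟨0, 0, le_rfl, le_rfl, by omega, ?_⟩
    rw [reachM_nil]
    ext t; simp [goodSet]; omega
  | append_singleton w s ih =>
    have hw' : IsDyckNWalk w := fun u hu => hw u (by simp [hu])
    have hs : s = {-1} ∨ s = {1} ∨ s = ({-1, 1} : Finset ℤ) := hw s (by simp)
    rcases ih hw' with he | ⟨i, j, h0, hij, hp, hg⟩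
    · left; exact reachM_snoc_empty he s
    rcases hs with rfl | rfl | rfl
    · -- step {-1}
      rcases eq_or_lt_of_le h0 with hi0 | hi1
      · rcases le_or_gt j 0 with hj0 | hj1
        · left; exact step_neg_dead hg hj0
        · right
          refine ⟨1, j - 1, by omega, by omega, by omega, step_neg_zero hg hi0.symm (by omega)⟩
      · right
        exact ⟨i - 1, j - 1, by omega, by omega, by omega, step_neg_pos hg (by omega) hij⟩
    · right; exact ⟨i + 1, j + 1, by omega, by omega, by omega, step_pos hg h0 hij⟩
    · rcases eq_or_lt_of_le h0 with hi0 | hi1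
      · right
        exact ⟨1, j + 1, by omega, by omega, by omega, step_both_zero hg hi0.symm hij⟩
      · right
        exact ⟨i - 1, j + 1, by omega, by omega, by omega, step_both_pos hg (by omega) hij hp⟩

lemma goodSet_sInf {i j : ℤ} (hij : i ≤ j) : sInf (goodSet i j) = i :=
  IsLeast.csInf_eq ⟨⟨le_rfl, hij, by omega⟩, fun x hx => hx.1⟩

lemma goodSet_sSup {i j : ℤ} (hij : i ≤ j) (hp : 2 ∣ j - i) : sSup (goodSet i j) = j :=
  IsGreatest.csSup_eq ⟨⟨hij, le_rfl, hp⟩, fun x hx => hx.2.1⟩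

lemma A_iff {w : List (Finset ℤ)} {i j : ℤ} (h : reachM w = goodSet i j)
    (hij : i ≤ j) (hp : 2 ∣ j - i) (a b : ℤ) :
    ((reachM w).Nonempty ∧ sInf (reachM w) = a ∧ sSup (reachM w) = b) ↔ (i = a ∧ j = b) := by
  rw [h, goodSet_sInf hij, goodSet_sSup hij hp]
  constructor
  · rintro ⟨_, rfl, rfl⟩; exact ⟨rfl, rfl⟩
  · rintro ⟨rfl, rfl⟩
    exact ⟨⟨i, le_rfl, hij, by omega⟩, rfl, rfl⟩

lemma A_empty {w : List (Finset ℤ)} (h : reachM w = ∅) (a b : ℤ) :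
    ¬((reachM w).Nonempty ∧ sInf (reachM w) = a ∧ sSup (reachM w) = b) := by
  rw [h]; rintro ⟨⟨x, hx⟩, -⟩; exact hx

lemma dwalk_isDyck {n : ℕ} (f : Fin n → Fin 3) : IsDyckNWalk (dwalk f) := by
  intro s hs
  rcases List.mem_ofFn.mp hs with ⟨k, rfl⟩
  have : ∀ m : Fin 3, dstep m = {-1} ∨ dstep m = {1} ∨ dstep m = ({-1, 1} : Finset ℤ) := by
    decide
  exact this (f k)

lemma dwalk_snoc {n : ℕ} (g : Fin n → Fin 3) (s : Fin 3) :
    dwalk (Fin.snoc g s) = dwalk g ++ [dstep s] := by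
  simp only [dwalk, List.ofFn_succ']
  simp [Fin.snoc_castSucc, Fin.snoc_last, List.concat_eq_append]

def snocEquiv (n : ℕ) : ((Fin n → Fin 3) × Fin 3) ≃ (Fin (n + 1) → Fin 3) where
  toFun x := Fin.snoc x.1 x.2
  invFun f := (fun k => f k.castSucc, f (Fin.last n))
  left_inv := by rintro ⟨g, s⟩; simp
  right_inv := by
    intro f; funext k
    refine Fin.lastCases ?_ ?_ k <;> simp

lemma coefD_zero (p : Fin 3 → ℝ) (i j : ℕ) :
    coefD p i j 0 = if i = 0 ∧ j = 0 then 1 else 0 := by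
  classical
  rw [coefD, Fintype.sum_unique]
  have h1 : ∀ f : Fin 0 → Fin 3, dwalk f = [] := fun f => by simp [dwalk]
  rw [h1, reachM_nil]
  simp only [csInf_singleton, csSup_singleton, Finset.univ_eq_empty, Finset.prod_empty]
  by_cases h : i = 0 ∧ j = 0
  · rw [if_pos, if_pos h]
    exact ⟨⟨0, rfl⟩, by simp [h.1], by simp [h.2]⟩
  · rw [if_neg, if_neg h]
    rintro ⟨-, h2, h3⟩
    exact h ⟨by exact_mod_cast h2.symm, by exact_mod_cast h3.symm⟩

open Classical in
lemma ite_A_iff {w : List (Finset ℤ)} {i₀ j₀ : ℤ} (h : reachM w = goodSet i₀ j₀)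
    (hij : i₀ ≤ j₀) (hp : 2 ∣ j₀ - i₀) (a b : ℤ) (x y : ℝ) :
    (if (reachM w).Nonempty ∧ sInf (reachM w) = a ∧ sSup (reachM w) = b then x else y)
      = if i₀ = a ∧ j₀ = b then x else y := by
  exact if_congr (A_iff h hij hp a b) rfl rfl

open Classical in
lemma ite_A_empty {w : List (Finset ℤ)} (h : reachM w = ∅) (a b : ℤ) (x y : ℝ) :
    (if (reachM w).Nonempty ∧ sInf (reachM w) = a ∧ sSup (reachM w) = b then x else y) = y :=
  if_neg (A_empty h a b)

lemma ite_collapse {c d : Prop} [i1 : Decidable c] [i2 : Decidable d] (x y : ℝ) :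
    (@ite ℝ c i1 (x * @ite ℝ d i2 y 0) 0)
      = @ite ℝ (c ∧ d) (Classical.propDecidable _) (x * y) 0 := by
  by_cases hc : c <;> by_cases hd : d <;> simp [hc, hd]

set_option maxHeartbeats 1000000 in
open Classical in
lemma coefD_succ (p : Fin 3 → ℝ) (i j n : ℕ) :
    coefD p i j (n + 1) =
      p 0 * coefD p (i + 1) (j + 1) n
      + (if i = 1 then p 0 * coefD p 0 (j + 1) n else 0)
      + (if 1 ≤ i ∧ 1 ≤ j then p 1 * coefD p (i - 1) (j - 1) n else 0)
      + (if 1 ≤ j then p 2 * coefD p (i + 1) (j - 1) n else 0)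
      + (if i = 1 ∧ 1 ≤ j then p 2 * coefD p 0 (j - 1) n else 0) := by
  have hprod : ∀ (g : Fin n → Fin 3) (s : Fin 3),
      (∏ k : Fin (n + 1), p ((Fin.snoc g s : Fin (n+1) → Fin 3) k)) = (∏ k, p (g k)) * p s := by
    intro g s
    rw [Fin.prod_univ_castSucc]
    simp
  have lhs_eq : coefD p i j (n + 1) = ∑ g : Fin n → Fin 3, ∑ s : Fin 3,
      (if (reachM (dwalk g ++ [dstep s])).Nonempty ∧
          sInf (reachM (dwalk g ++ [dstep s])) = (i : ℤ) ∧
          sSup (reachM (dwalk g ++ [dstep s])) = (j : ℤ)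
       then (∏ k, p (g k)) * p s else 0) := by
    rw [coefD, ← Equiv.sum_comp (snocEquiv n), Fintype.sum_prod_type]
    refine Finset.sum_congr rfl fun g _ => Finset.sum_congr rfl fun s _ => ?_
    rw [show ((snocEquiv n) (g, s) : Fin (n+1) → Fin 3) = Fin.snoc g s from rfl,
        dwalk_snoc, hprod]
  have push : ∀ (c : Prop) (inst : Decidable c) (x : ℝ) (F : (Fin n → Fin 3) → ℝ),
      (@ite ℝ c inst (x * ∑ g, F g) 0) = ∑ g : Fin n → Fin 3, @ite ℝ c inst (x * F g) 0 := by
    intro c inst x F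
    split
    · rw [Finset.mul_sum]
    · rw [Finset.sum_const_zero]
  rw [lhs_eq]
  simp only [coefD]
  rw [Finset.mul_sum, push, push, push, push,
      ← Finset.sum_add_distrib, ← Finset.sum_add_distrib, ← Finset.sum_add_distrib,
      ← Finset.sum_add_distrib]
  refine Finset.sum_congr rfl fun g _ => ?_
  rw [Fin.sum_univ_three,
      show dstep 0 = ({-1} : Finset ℤ) from rfl,
      show dstep 1 = ({1} : Finset ℤ) from rfl,
      show dstep 2 = ({-1, 1} : Finset ℤ) from rfl]
  rcases reachM_struct (dwalk_isDyck g) with he | ⟨i₀, j₀, h0, hij, hp, hg⟩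
  · rw [ite_A_empty (reachM_snoc_empty he _), ite_A_empty (reachM_snoc_empty he _),
        ite_A_empty (reachM_snoc_empty he _), ite_A_empty he, ite_A_empty he,
        ite_A_empty he, ite_A_empty he, ite_A_empty he]
    simp
  · rw [ite_A_iff hg hij hp, ite_A_iff hg hij hp, ite_A_iff hg hij hp,
        ite_A_iff hg hij hp, ite_A_iff hg hij hp,
        ite_collapse, ite_collapse, ite_collapse, ite_collapse]
    rcases eq_or_lt_of_le h0 with hi0 | hi1
    · rcases eq_or_lt_of_le hij with hj0 | hj1
      · rw [ite_A_empty (step_neg_dead hg (by omega)),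
            ite_A_iff (step_pos hg h0 hij) (by omega) (by omega),
            ite_A_iff (step_both_zero hg hi0.symm hij) (by omega) (by omega)]
        split_ifs <;> first | (exfalso; omega) | ring
      · have hj2 : 2 ≤ j₀ := by omega
        rw [ite_A_iff (step_neg_zero hg hi0.symm hj2) (by omega) (by omega),
            ite_A_iff (step_pos hg h0 hij) (by omega) (by omega),
            ite_A_iff (step_both_zero hg hi0.symm hij) (by omega) (by omega)]
        split_ifs <;> first | (exfalso; omega) | ring
    · rw [ite_A_iff (step_neg_pos hg (by omega) hij) (by omega) (by omega),
          ite_A_iff (step_pos hg h0 hij) (by omega) (by omega),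
          ite_A_iff (step_both_pos hg (by omega) hij hp) (by omega) (by omega)]
      split_ifs <;> first | (exfalso; omega) | ring

lemma coefD_eq_zero_of_lt (p : Fin 3 → ℝ) {i j : ℕ} (n : ℕ) (h : j < i) :
    coefD p i j n = 0 := by
  classical
  rw [coefD]
  apply Finset.sum_eq_zero
  intro f _
  rcases reachM_struct (dwalk_isDyck f) with he | ⟨i₀, j₀, h0, hij, hp, hg⟩
  · exact if_neg (A_empty he _ _)
  · rw [ite_A_iff hg hij hp]
    apply if_neg
    rintro ⟨rfl, rfl⟩
    omega

noncomputable def Efn (a b c : ℕ) : Fin 3 →₀ ℕ :=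
  Finsupp.single 0 a + Finsupp.single 1 b + Finsupp.single 2 c

lemma Efn_apply0 (a b c : ℕ) : Efn a b c 0 = a := by
  simp [Efn, Finsupp.single_apply]
lemma Efn_apply1 (a b c : ℕ) : Efn a b c 1 = b := by
  simp [Efn, Finsupp.single_apply]
lemma Efn_apply2 (a b c : ℕ) : Efn a b c 2 = c := by
  simp [Efn, Finsupp.single_apply]

lemma Efn_le (a b c : ℕ) (m : Fin 3 →₀ ℕ) :
    Efn a b c ≤ m ↔ a ≤ m 0 ∧ b ≤ m 1 ∧ c ≤ m 2 := by
  rw [Finsupp.le_def]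
  constructor
  · intro h
    exact ⟨by simpa [Efn_apply0] using h 0, by simpa [Efn_apply1] using h 1,
      by simpa [Efn_apply2] using h 2⟩
  · rintro ⟨h1, h2, h3⟩ k
    fin_cases k
    · simpa [Efn_apply0] using h1
    · simpa [Efn_apply1] using h2
    · simpa [Efn_apply2] using h3

lemma sub_Efn_0 (m : Fin 3 →₀ ℕ) (a b c : ℕ) : (m - Efn a b c) 0 = m 0 - a := by
  rw [Finsupp.tsub_apply, Efn_apply0]
lemma sub_Efn_1 (m : Fin 3 →₀ ℕ) (a b c : ℕ) : (m - Efn a b c) 1 = m 1 - b := by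
  rw [Finsupp.tsub_apply, Efn_apply1]
lemma sub_Efn_2 (m : Fin 3 →₀ ℕ) (a b c : ℕ) : (m - Efn a b c) 2 = m 2 - c := by
  rw [Finsupp.tsub_apply, Efn_apply2]

lemma eq_Efn_iff (m : Fin 3 →₀ ℕ) (a b c : ℕ) :
    m = Efn a b c ↔ m 0 = a ∧ m 1 = b ∧ m 2 = c := by
  constructor
  · rintro rfl
    exact ⟨Efn_apply0 a b c, Efn_apply1 a b c, Efn_apply2 a b c⟩
  · rintro ⟨h1, h2, h3⟩
    ext k
    fin_cases k
    · simpa [Efn_apply0]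
    · simpa [Efn_apply1]
    · simpa [Efn_apply2]

open MvPowerSeries in
lemma mono_eq (a b c : ℕ) (r : ℝ) :
    (monomial (Efn a b c) r : MvPowerSeries (Fin 3) ℝ)
      = X 0 ^ a * X 1 ^ b * X 2 ^ c * C (σ := Fin 3) (R := ℝ) r := by
  rw [X_pow_eq, X_pow_eq, X_pow_eq, ← monomial_zero_eq_C_apply,
      monomial_mul_monomial, monomial_mul_monomial, monomial_mul_monomial]
  simp [Efn]

open MvPowerSeries in
lemma coeff_shift (a b c : ℕ) (r : ℝ) (S : MvPowerSeries (Fin 3) ℝ) (m : Fin 3 →₀ ℕ) :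
    coeff m ((monomial (Efn a b c) r : MvPowerSeries (Fin 3) ℝ) * S)
      = if a ≤ m 0 ∧ b ≤ m 1 ∧ c ≤ m 2 then r * coeff (m - Efn a b c) S else 0 := by
  rw [coeff_monomial_mul]
  exact if_congr (Efn_le a b c m) rfl rfl

set_option maxHeartbeats 1000000 in
open MvPowerSeries in
/-- the functional equation for D⁺(x,y;t), multiplied through by xy to
clear the (Laurent) negative powers of x and y. -/
theorem dyck_meander_functional_equation (p : Fin 3 → ℝ) :
    (X 0 : MvPowerSeries (Fin 3) ℝ) * X 1 * Dxy p =
      X 0 * X 1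
      + X 2 * (C (σ := Fin 3) (R := ℝ) (p 0) + C (σ := Fin 3) (R := ℝ) (p 1) * X 0 ^ 2 * X 1 ^ 2
          + C (σ := Fin 3) (R := ℝ) (p 2) * X 1 ^ 2) * (Dxy p - D0y p)
      + X 2 * (C (σ := Fin 3) (R := ℝ) (p 0) * X 0 ^ 2
          + C (σ := Fin 3) (R := ℝ) (p 1 + p 2) * X 0 ^ 2 * X 1 ^ 2) * (D0y p - D00 p)
      + X 2 * C (σ := Fin 3) (R := ℝ) (p 1 + p 2) * X 0 ^ 2 * X 1 ^ 2 * D00 p := by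
  have expand :
      (X 0 : MvPowerSeries (Fin 3) ℝ) * X 1
      + X 2 * (C (σ := Fin 3) (R := ℝ) (p 0) + C (σ := Fin 3) (R := ℝ) (p 1) * X 0 ^ 2 * X 1 ^ 2
          + C (σ := Fin 3) (R := ℝ) (p 2) * X 1 ^ 2) * (Dxy p - D0y p)
      + X 2 * (C (σ := Fin 3) (R := ℝ) (p 0) * X 0 ^ 2
          + C (σ := Fin 3) (R := ℝ) (p 1 + p 2) * X 0 ^ 2 * X 1 ^ 2) * (D0y p - D00 p)
      + X 2 * C (σ := Fin 3) (R := ℝ) (p 1 + p 2) * X 0 ^ 2 * X 1 ^ 2 * D00 p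
      = monomial (Efn 1 1 0) (1 : ℝ)
        + ((monomial (Efn 0 0 1) (p 0)) * (Dxy p - D0y p)
        + (monomial (Efn 2 2 1) (p 1)) * (Dxy p - D0y p)
        + (monomial (Efn 0 2 1) (p 2)) * (Dxy p - D0y p)
        + (monomial (Efn 2 0 1) (p 0)) * (D0y p - D00 p)
        + (monomial (Efn 2 2 1) (p 1 + p 2)) * (D0y p - D00 p)
        + (monomial (Efn 2 2 1) (p 1 + p 2)) * D00 p) := by
    rw [mono_eq, mono_eq, mono_eq, mono_eq, mono_eq, mono_eq, map_one]
    ring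
  have lhs : (X 0 : MvPowerSeries (Fin 3) ℝ) * X 1 * Dxy p
      = monomial (Efn 1 1 0) (1 : ℝ) * Dxy p := by
    rw [mono_eq, map_one]; ring
  rw [lhs, expand]
  set q := p 1 + p 2 with hq
  apply MvPowerSeries.ext
  intro m
  have cDxy : ∀ m' : Fin 3 →₀ ℕ, coeff m' (Dxy p) = coefD p (m' 0) (m' 1) (m' 2) :=
    fun _ => rfl
  have cD0y : ∀ m' : Fin 3 →₀ ℕ,
      coeff m' (D0y p) = if m' 0 = 0 then coefD p 0 (m' 1) (m' 2) else 0 := fun _ => rfl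
  have cD00 : ∀ m' : Fin 3 →₀ ℕ,
      coeff m' (D00 p) = if m' 0 = 0 ∧ m' 1 = 0 then coefD p 0 0 (m' 2) else 0 := fun _ => rfl
  rw [coeff_shift]
  simp only [map_add, map_sub, coeff_shift, coeff_monomial, eq_Efn_iff,
    cDxy, cD0y, cD00, sub_Efn_0, sub_Efn_1, sub_Efn_2]
  generalize m 0 = a
  generalize m 1 = b
  generalize m 2 = n
  clear expand lhs cDxy cD0y cD00 m
  simp only [Nat.sub_zero, zero_le, true_and, one_mul]
  rcases n with _ | n
  · rw [coefD_zero]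
    simp only [Nat.not_succ_le_zero, and_false, false_and, if_false, add_zero, Nat.le_refl, and_true]
    split_ifs <;> first | rfl | (exfalso; omega) | simp
  · rw [coefD_succ, hq]
    rcases a with _ | _ | _ | a <;> rcases b with _ | _ | _ | b <;>
      simp [Nat.sub_sub] <;>
      first
        | ring1
        | (refine Or.inr (coefD_eq_zero_of_lt p _ ?_); omega)
        | (split_ifs <;>
            first
              | (exfalso; omega)
              | ring1
              | (refine Or.inr (coefD_eq_zero_of_lt p _ ?_); omega)
              | simp [coefD_eq_zero_of_lt])
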